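/- arXiv:1405.4122 — 2 statements merged into one kernel-verified Lean document; each statement's English description precedes it below -/
import Mathlib

section
/- Let H₊ be a selfadjoint operator with 0 in its resolvent set, and T a bounded finite-rank symmetric operator. Then H := H₊ - T (defined on D(H₊)), if selfadjoint, has spectrum satisfying σ(H) ⊂ (-∞, -ε] ∪ {0} ∪ [ε, ∞) for some ε > 0; i.e., 0 is not an accumulation point of σ(H). -/
open scoped ComplexInnerProductSpace

/-- `z` belongs to the resolvent set of the (unbounded) operator `T`. -/
def IsInResolventSet {𝒳 : Type*} [NormedAddCommGroup 𝒳] [NormedSpace ℂ 𝒳]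
    (T : 𝒳 →ₗ.[ℂ] 𝒳) (z : ℂ) : Prop :=
  ∃ R : 𝒳 →L[ℂ] 𝒳, (∀ y : 𝒳, ∃ hy : R y ∈ T.domain, T ⟨R y, hy⟩ - z • R y = y) ∧
    ∀ x : T.domain, R (T x - z • (x : 𝒳)) = x

/-- The spectrum of an unbounded operator. -/
def pSpectrum {𝒳 : Type*} [NormedAddCommGroup 𝒳] [NormedSpace ℂ 𝒳]
    (T : 𝒳 →ₗ.[ℂ] 𝒳) : Set ℂ :=
  {z : ℂ | ¬ IsInResolventSet T z}

section Aux
variable {𝒳 : Type*} [NormedAddCommGroup 𝒳] [InnerProductSpace ℂ 𝒳] [CompleteSpace 𝒳]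

lemma sa_domain_eq {H : 𝒳 →ₗ.[ℂ] 𝒳} (hH : IsSelfAdjoint H) :
    H.adjoint.domain = H.domain := by
  rw [LinearPMap.isSelfAdjoint_def.mp hH]

lemma sa_apply_eq {H : 𝒳 →ₗ.[ℂ] 𝒳} (hH : IsSelfAdjoint H) {x : H.adjoint.domain}
    {y : H.domain} (h : (x : 𝒳) = y) : H.adjoint x = H y := by
  obtain ⟨hd, hval⟩ := LinearPMap.ext_iff.mp (LinearPMap.isSelfAdjoint_def.mp hH)
  rcases x with ⟨x, hx⟩
  rcases y with ⟨y, hy⟩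
  simp only at h
  subst h
  exact @hval x hx hy

lemma sa_symm {H : 𝒳 →ₗ.[ℂ] 𝒳} (hH : IsSelfAdjoint H) (x y : H.domain) :
    ⟪H x, (y : 𝒳)⟫ = ⟪(x : 𝒳), H y⟫ := by
  have hfa := LinearPMap.adjoint_isFormalAdjoint hH.dense_domain (T := H)
  have hx' : (x : 𝒳) ∈ H.adjoint.domain := (sa_domain_eq hH).symm ▸ x.2
  have h2 := hfa ⟨(x : 𝒳), hx'⟩ y
  rwa [sa_apply_eq hH (x := ⟨(x : 𝒳), hx'⟩) (y := x) rfl] at h2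

lemma eig_real {H : 𝒳 →ₗ.[ℂ] 𝒳} (hH : IsSelfAdjoint H) {x : H.domain}
    (hx : (x : 𝒳) ≠ 0) {z : ℂ} (hz : H x = z • (x : 𝒳)) : z.im = 0 := by
  have h := sa_symm hH x x
  rw [hz, inner_smul_left, inner_smul_right] at h
  have hxx : (⟪(x : 𝒳), (x : 𝒳)⟫ : ℂ) ≠ 0 := by
    simpa [inner_self_eq_zero] using hx
  have : (starRingEnd ℂ) z = z := mul_right_cancel₀ hxx h
  exact Complex.conj_eq_iff_im.mp this

lemma nonreal_resolvent {H : 𝒳 →ₗ.[ℂ] 𝒳} (hH : IsSelfAdjoint H) {z : ℂ}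
    (hz : z.im ≠ 0) : IsInResolventSet H z := by
  classical
  have hd := hH.dense_domain
  set b : ℝ := |z.im| with hbdef
  have hb : 0 < b := abs_pos.mpr hz
  set e : H.domain →ₗ[ℂ] 𝒳 := H.toFun - z • H.domain.subtype with hedef
  have he : ∀ x : H.domain, e x = H x - z • (x : 𝒳) := fun x => rfl
  -- lower bound
  have hlow : ∀ x : H.domain, b * ‖(x : 𝒳)‖ ≤ ‖e x‖ := by
    intro x
    have h1 : ⟪e x, (x : 𝒳)⟫ = ⟪H x, (x : 𝒳)⟫ - (starRingEnd ℂ) z * ⟪(x : 𝒳), (x : 𝒳)⟫ := by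
      rw [he, inner_sub_left, inner_smul_left]
    have hreal : (⟪H x, (x : 𝒳)⟫ : ℂ).im = 0 := by
      have h2 := sa_symm hH x x
      rw [← inner_conj_symm (x : 𝒳) (H x)] at h2
      exact Complex.conj_eq_iff_im.mp h2.symm
    have hxx : (⟪(x : 𝒳), (x : 𝒳)⟫ : ℂ) = (‖(x : 𝒳)‖ : ℂ) ^ 2 :=
      inner_self_eq_norm_sq_to_K (x : 𝒳)
    have him : (⟪e x, (x : 𝒳)⟫ : ℂ).im = z.im * ‖(x : 𝒳)‖ ^ 2 := by
      rw [h1, hxx]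
      simp [Complex.sub_im, Complex.mul_im, hreal, ← Complex.ofReal_pow]
    have hcs : ‖(⟪e x, (x : 𝒳)⟫ : ℂ)‖ ≤ ‖e x‖ * ‖(x : 𝒳)‖ := norm_inner_le_norm _ _
    have him2 : b * ‖(x : 𝒳)‖ ^ 2 ≤ ‖(⟪e x, (x : 𝒳)⟫ : ℂ)‖ := by
      calc b * ‖(x : 𝒳)‖ ^ 2 = |(⟪e x, (x : 𝒳)⟫ : ℂ).im| := by
            rw [him, abs_mul, abs_of_nonneg (by positivity : (0:ℝ) ≤ ‖(x : 𝒳)‖ ^ 2)]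
        _ ≤ ‖(⟪e x, (x : 𝒳)⟫ : ℂ)‖ := Complex.abs_im_le_norm _
    rcases eq_or_lt_of_le (norm_nonneg (x : 𝒳)) with h0 | h0
    · simp [← h0]
    · have := le_trans him2 hcs
      have h3 : b * ‖(x : 𝒳)‖ * ‖(x : 𝒳)‖ ≤ ‖e x‖ * ‖(x : 𝒳)‖ := by
        calc b * ‖(x : 𝒳)‖ * ‖(x : 𝒳)‖ = b * ‖(x : 𝒳)‖ ^ 2 := by ring
          _ ≤ ‖e x‖ * ‖(x : 𝒳)‖ := this
      exact le_of_mul_le_mul_right h3 h0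
  have hinj : Function.Injective e := by
    intro u v huv
    have h0 : e (u - v) = 0 := by rw [map_sub, huv, sub_self]
    have := hlow (u - v)
    rw [h0, norm_zero] at this
    have : ‖((u - v : H.domain) : 𝒳)‖ = 0 := by nlinarith [norm_nonneg ((u - v : H.domain) : 𝒳)]
    have : ((u - v : H.domain) : 𝒳) = 0 := by rwa [norm_eq_zero] at this
    have h4 : (u : 𝒳) - v = 0 := by rwa [Submodule.coe_sub] at this
    exact Subtype.ext (sub_eq_zero.mp h4)
  set Rg : Submodule ℂ 𝒳 := LinearMap.range e with hRgdef
  have hclosed : IsClosed (Rg : Set 𝒳) := by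
    apply IsSeqClosed.isClosed
    intro f y hf hfy
    choose xs hxs using fun n => LinearMap.mem_range.mp (hf n)
    have hcf : CauchySeq f := hfy.cauchySeq
    have hcx : CauchySeq (fun n => ((xs n : 𝒳))) := by
      rw [Metric.cauchySeq_iff] at hcf ⊢
      intro ε hε
      obtain ⟨N, hN⟩ := hcf (b * ε) (by positivity)
      refine ⟨N, fun m hm n hn => ?_⟩
      have h1 := hlow (xs m - xs n)
      rw [map_sub, hxs, hxs] at h1
      rw [Submodule.coe_sub] at h1
      have h2 := hN m hm n hn
      rw [dist_eq_norm] at h2 ⊢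
      nlinarith [norm_nonneg ((xs m : 𝒳) - (xs n : 𝒳))]
    obtain ⟨x, hx⟩ := cauchySeq_tendsto_of_complete hcx
    have hHx : Filter.Tendsto (fun n => H (xs n)) Filter.atTop (nhds (y + z • x)) := by
      have hfun : (fun n => H (xs n)) = fun n => f n + z • ((xs n : 𝒳)) := by
        funext n
        have h3 := hxs n
        rw [he] at h3
        rw [← h3]; abel
      rw [hfun]
      exact hfy.add (hx.const_smul z)
    have hid : ∀ u : H.domain, ⟪(y + z • x : 𝒳), (u : 𝒳)⟫ = ⟪x, H u⟫ := by
      intro u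
      have t1 : Filter.Tendsto (fun n => (⟪((xs n : 𝒳)), H u⟫ : ℂ)) Filter.atTop
          (nhds ⟪x, H u⟫) := Filter.Tendsto.inner hx tendsto_const_nhds
      have t2 : Filter.Tendsto (fun n => (⟪H (xs n), (u : 𝒳)⟫ : ℂ)) Filter.atTop
          (nhds ⟪(y + z • x : 𝒳), (u : 𝒳)⟫) := Filter.Tendsto.inner hHx tendsto_const_nhds
      have heq : ∀ n, (⟪((xs n) : 𝒳), H u⟫ : ℂ) = ⟪H (xs n), (u : 𝒳)⟫ := by
        intro n
        calc (⟪((xs n) : 𝒳), H u⟫ : ℂ) = (starRingEnd ℂ) ⟪H u, ((xs n) : 𝒳)⟫ :=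
              (inner_conj_symm _ _).symm
          _ = (starRingEnd ℂ) ⟪(u : 𝒳), H (xs n)⟫ := by rw [sa_symm hH u (xs n)]
          _ = ⟪H (xs n), (u : 𝒳)⟫ := inner_conj_symm _ _
      simp_rw [heq] at t1
      exact tendsto_nhds_unique t2 t1
    have hmemadj : x ∈ H.adjoint.domain :=
      LinearPMap.mem_adjoint_domain_of_exists x ⟨y + z • x, fun u => hid u⟩
    have hval : H.adjoint ⟨x, hmemadj⟩ = y + z • x :=
      LinearPMap.adjoint_apply_eq hd _ (fun u => hid u)
    have hmem : x ∈ H.domain := sa_domain_eq hH ▸ hmemadj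
    rw [sa_apply_eq hH (x := ⟨x, hmemadj⟩) (y := ⟨x, hmem⟩) rfl] at hval
    refine ⟨⟨x, hmem⟩, ?_⟩
    rw [he, hval]
    simp
  have hdense : Rgᗮ = ⊥ := by
    rw [Submodule.eq_bot_iff]
    intro u hu
    rw [Submodule.mem_orthogonal] at hu
    have hstep : ∀ v : H.domain, ⟪((starRingEnd ℂ) z • u : 𝒳), (v : 𝒳)⟫ = ⟪u, H v⟫ := by
      intro v
      have h0 := hu (e v) (LinearMap.mem_range_self e v)
      rw [he, inner_sub_left, sub_eq_zero, inner_smul_left] at h0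
      calc ⟪((starRingEnd ℂ) z • u : 𝒳), (v : 𝒳)⟫ = z * ⟪u, (v : 𝒳)⟫ := by
            rw [inner_smul_left]; simp
        _ = (starRingEnd ℂ) ((starRingEnd ℂ) z * ⟪(v : 𝒳), u⟫) := by
            rw [map_mul]; simp [inner_conj_symm]
        _ = (starRingEnd ℂ) ⟪H v, u⟫ := by rw [h0]
        _ = ⟪u, H v⟫ := inner_conj_symm _ _
    have hmemadj : u ∈ H.adjoint.domain :=
      LinearPMap.mem_adjoint_domain_of_exists u ⟨_, hstep⟩
    have hval : H.adjoint ⟨u, hmemadj⟩ = (starRingEnd ℂ) z • u :=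
      LinearPMap.adjoint_apply_eq hd _ hstep
    have hmem : u ∈ H.domain := sa_domain_eq hH ▸ hmemadj
    rw [sa_apply_eq hH (x := ⟨u, hmemadj⟩) (y := ⟨u, hmem⟩) rfl] at hval
    by_contra hu0
    have him := eig_real hH (x := ⟨u, hmem⟩) hu0 hval
    rw [Complex.conj_im] at him
    exact hz (by linarith)
  have htop : Rg = ⊤ := by
    have h1 : Rg.topologicalClosure = ⊤ := Submodule.topologicalClosure_eq_top_iff.mpr hdense
    rwa [hclosed.submodule_topologicalClosure_eq] at h1
  have hsurj : Function.Surjective e := LinearMap.range_eq_top.mp htop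
  set eqv := LinearEquiv.ofBijective e ⟨hinj, hsurj⟩ with heqv
  set R₀ : 𝒳 →ₗ[ℂ] 𝒳 := H.domain.subtype ∘ₗ (eqv.symm : 𝒳 →ₗ[ℂ] H.domain) with hR₀def
  have hR₀ : ∀ y, R₀ y = ((eqv.symm y : H.domain) : 𝒳) := fun _ => rfl
  have hbound : ∀ y, ‖R₀ y‖ ≤ b⁻¹ * ‖y‖ := by
    intro y
    have h1 := hlow (eqv.symm y)
    have h2 : e (eqv.symm y) = y := eqv.apply_symm_apply y
    rw [h2] at h1
    rw [hR₀]
    calc ‖((eqv.symm y : H.domain) : 𝒳)‖ = b⁻¹ * (b * ‖((eqv.symm y : H.domain) : 𝒳)‖) := by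
          field_simp
      _ ≤ b⁻¹ * ‖y‖ := by
          apply mul_le_mul_of_nonneg_left h1 (by positivity)
  set R := R₀.mkContinuous b⁻¹ hbound with hRdef
  have hRy : ∀ y, R y = ((eqv.symm y : H.domain) : 𝒳) := fun _ => rfl
  refine ⟨R, fun y => ?_, fun x => ?_⟩
  · have hmem : R y ∈ H.domain := by rw [hRy]; exact (eqv.symm y).2
    refine ⟨hmem, ?_⟩
    have hsub : (⟨R y, hmem⟩ : H.domain) = eqv.symm y := Subtype.ext (hRy y)
    rw [hsub, hRy]
    rw [← he]
    exact eqv.apply_symm_apply y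
  · have h1 : H x - z • (x : 𝒳) = e x := (he x).symm
    rw [h1, hRy]
    rw [show e x = eqv x from rfl, eqv.symm_apply_apply]
end Aux


section Aux2
variable {𝒳 : Type*} [NormedAddCommGroup 𝒳] [InnerProductSpace ℂ 𝒳] [CompleteSpace 𝒳]

lemma near_zero (Hp : 𝒳 →ₗ.[ℂ] 𝒳) (Hpinv : 𝒳 →L[ℂ] 𝒳)
    (hinv1 : ∀ y : 𝒳, ∃ hy : Hpinv y ∈ Hp.domain, Hp ⟨Hpinv y, hy⟩ = y)
    (hinv2 : ∀ x : Hp.domain, Hpinv (Hp x) = x)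
    (T : 𝒳 →L[ℂ] 𝒳)
    [FiniteDimensional ℂ (LinearMap.range (T : 𝒳 →ₗ[ℂ] 𝒳))]
    (H : 𝒳 →ₗ.[ℂ] 𝒳) (hdom : H.domain = Hp.domain)
    (hact : ∀ (x : 𝒳) (hx : x ∈ H.domain) (hx' : x ∈ Hp.domain),
      H ⟨x, hx⟩ = Hp ⟨x, hx'⟩ - T x)
    (z : ℂ) (hz : ‖z‖ * ‖Hpinv‖ < 1) :
    IsInResolventSet H z ∨ ∃ x : H.domain, (x : 𝒳) ≠ 0 ∧ H x = z • (x : 𝒳) := by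
  classical
  have hz' : ‖z • Hpinv‖ < 1 := by rwa [norm_smul]
  set A : (𝒳 →L[ℂ] 𝒳)ˣ := Units.oneSub (z • Hpinv) hz' with hAdef
  set Rz : 𝒳 →L[ℂ] 𝒳 := Hpinv * (↑A⁻¹ : 𝒳 →L[ℂ] 𝒳) with hRzdef
  have hAval : (A : 𝒳 →L[ℂ] 𝒳) = 1 - z • Hpinv := rfl
  have hRzy : ∀ y, Rz y = Hpinv ((↑A⁻¹ : 𝒳 →L[ℂ] 𝒳) y) := fun _ => rfl
  -- Rz is the resolvent of Hp at z
  have hRz1 : ∀ y : 𝒳, ∃ hy : Rz y ∈ Hp.domain, Hp ⟨Rz y, hy⟩ - z • Rz y = y := by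
    intro y
    obtain ⟨hmem, hval⟩ := hinv1 ((↑A⁻¹ : 𝒳 →L[ℂ] 𝒳) y)
    refine ⟨hmem, ?_⟩
    show Hp ⟨Hpinv ((↑A⁻¹ : 𝒳 →L[ℂ] 𝒳) y), hmem⟩ - z • Rz y = y
    rw [hval, hRzy]
    have h1 : (↑A⁻¹ : 𝒳 →L[ℂ] 𝒳) y - z • Hpinv ((↑A⁻¹ : 𝒳 →L[ℂ] 𝒳) y)
        = ((A : 𝒳 →L[ℂ] 𝒳) * (↑A⁻¹ : 𝒳 →L[ℂ] 𝒳)) y := by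
      rw [hAval]
      simp [ContinuousLinearMap.mul_apply]
    rw [h1, A.mul_inv]
    simp
  have hRz2 : ∀ x : Hp.domain, Rz (Hp x - z • (x : 𝒳)) = x := by
    intro x
    have h1 : Hp x - z • (x : 𝒳) = (A : 𝒳 →L[ℂ] 𝒳) (Hp x) := by
      rw [hAval]
      simp [ContinuousLinearMap.mul_apply, hinv2 x]
    rw [h1, hRzy]
    have h2 : (↑A⁻¹ : 𝒳 →L[ℂ] 𝒳) ((A : 𝒳 →L[ℂ] 𝒳) (Hp x))
        = ((↑A⁻¹ : 𝒳 →L[ℂ] 𝒳) * (A : 𝒳 →L[ℂ] 𝒳)) (Hp x) := rfl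
    rw [h2, A.inv_mul]
    exact hinv2 x
  set K : 𝒳 →L[ℂ] 𝒳 := Rz.comp T with hKdef
  have hKy : ∀ y, K y = Rz (T y) := fun _ => rfl
  set V : Submodule ℂ 𝒳 := LinearMap.range (K : 𝒳 →ₗ[ℂ] 𝒳) with hVdef
  have hVfin : FiniteDimensional ℂ V := by
    have h1 : (K : 𝒳 →ₗ[ℂ] 𝒳) = (Rz : 𝒳 →ₗ[ℂ] 𝒳).comp (T : 𝒳 →ₗ[ℂ] 𝒳) := rfl
    rw [hVdef, h1, LinearMap.range_comp]
    infer_instance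
  by_cases hker : ∀ w : 𝒳, K w = w → w = 0
  · -- injective case: build the resolvent of H at z
    left
    haveI := hVfin
    have hKV : ∀ w : 𝒳, K w ∈ V := fun w => LinearMap.mem_range_self (K : 𝒳 →ₗ[ℂ] 𝒳) w
    have hres : ∀ x ∈ V, (LinearMap.id - (K : 𝒳 →ₗ[ℂ] 𝒳) : 𝒳 →ₗ[ℂ] 𝒳) x ∈ V := by
      intro x hx
      have : (LinearMap.id - (K : 𝒳 →ₗ[ℂ] 𝒳) : 𝒳 →ₗ[ℂ] 𝒳) x = x - K x := rfl
      rw [this]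
      exact sub_mem hx (hKV x)
    set g : V →ₗ[ℂ] V := (LinearMap.id - (K : 𝒳 →ₗ[ℂ] 𝒳) : 𝒳 →ₗ[ℂ] 𝒳).restrict hres with hgdef
    have hg : ∀ v : V, (g v : 𝒳) = (v : 𝒳) - K (v : 𝒳) := by
      intro v
      rw [hgdef, LinearMap.restrict_apply]
      rfl
    have ginj : Function.Injective g := by
      intro v w hvw
      have h1 : (v : 𝒳) - K (v : 𝒳) = (w : 𝒳) - K (w : 𝒳) := by
        rw [← hg, ← hg, hvw]
      have h2 : K ((v : 𝒳) - (w : 𝒳)) = (v : 𝒳) - (w : 𝒳) := by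
        rw [map_sub]
        exact (sub_eq_sub_iff_sub_eq_sub.mp h1).symm
      have h3 := hker _ h2
      exact Subtype.ext (sub_eq_zero.mp h3)
    have gsurj : Function.Surjective g := LinearMap.injective_iff_surjective.mp ginj
    set ge := LinearEquiv.ofBijective g ⟨ginj, gsurj⟩ with hgedef
    set Kres : 𝒳 →L[ℂ] V := K.codRestrict V (fun x => hKV x) with hKresdef
    set geinv : V →L[ℂ] V :=
      LinearMap.toContinuousLinearMap (ge.symm : V ≃ₗ[ℂ] V).toLinearMap with hgeinvdef
    set S : 𝒳 →L[ℂ] 𝒳 := 1 + V.subtypeL.comp (geinv.comp Kres) with hSdef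
    have hSy : ∀ y : 𝒳, S y = y + ((ge.symm ⟨K y, hKV y⟩ : V) : 𝒳) := fun y => rfl
    have key1 : ∀ y : 𝒳, S y - K (S y) = y := by
      intro y
      set v : V := ge.symm ⟨K y, hKV y⟩ with hvdef
      have h1 : g v = ⟨K y, hKV y⟩ := by
        have h0 := ge.apply_symm_apply ⟨K y, hKV y⟩
        exact h0
      have hgv : (v : 𝒳) - K (v : 𝒳) = K y := by
        have h2 := congrArg Subtype.val h1
        rw [hg] at h2
        exact h2
      rw [hSy]
      rw [map_add]
      have h3 : y + (v : 𝒳) - (K y + K (v : 𝒳)) = y + ((v : 𝒳) - K (v : 𝒳)) - K y := by abel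
      rw [h3, hgv]
      abel
    have key2 : ∀ x : 𝒳, S (x - K x) = x := by
      intro x
      have h1 : S (x - K x) - K (S (x - K x)) = x - K x := key1 (x - K x)
      have h2 : K (S (x - K x) - x) = S (x - K x) - x := by
        rw [map_sub]
        exact (sub_eq_sub_iff_sub_eq_sub.mp h1).symm
      have h3 := hker _ h2
      exact sub_eq_zero.mp h3
    set R : 𝒳 →L[ℂ] 𝒳 := S.comp Rz with hRdef
    refine ⟨R, fun y => ?_, fun x => ?_⟩
    · set x : 𝒳 := S (Rz y) with hxdef
      have h1 : x - K x = Rz y := key1 (Rz y)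
      have h2 : x = Rz (y + T x) := by
        calc x = (x - K x) + K x := by abel
          _ = Rz y + Rz (T x) := by rw [h1, hKy]
          _ = Rz (y + T x) := (map_add Rz y (T x)).symm
      obtain ⟨hm, hval⟩ := hRz1 (y + T x)
      have hmem : x ∈ Hp.domain := h2 ▸ hm
      have hsub : (⟨Rz (y + T x), hm⟩ : Hp.domain) = ⟨x, hmem⟩ := Subtype.ext h2.symm
      rw [hsub, ← h2] at hval
      have hmemH : x ∈ H.domain := hdom.symm ▸ hmem
      refine ⟨hmemH, ?_⟩
      show H ⟨x, hmemH⟩ - z • x = y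
      rw [hact x hmemH hmem]
      have h4 : Hp ⟨x, hmem⟩ = y + T x + z • x := by rw [← hval]; abel
      rw [h4]
      abel
    · have hxp : (x : 𝒳) ∈ Hp.domain := hdom ▸ x.2
      have h1 : H x = Hp ⟨(x : 𝒳), hxp⟩ - T (x : 𝒳) := hact (x : 𝒳) x.2 hxp
      have h2 : H x - z • (x : 𝒳) = (Hp ⟨(x : 𝒳), hxp⟩ - z • ((x : 𝒳))) - T (x : 𝒳) := by
        rw [h1]; abel
      show S (Rz (H x - z • (x : 𝒳))) = (x : 𝒳)
      rw [h2, map_sub, hRz2 ⟨(x : 𝒳), hxp⟩, ← hKy]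
      exact key2 (x : 𝒳)
  · -- eigenvector case
    right
    push_neg at hker
    obtain ⟨w, hKw, hw0⟩ := hker
    obtain ⟨hmem, hval⟩ := hRz1 (T w)
    have hRzTw : Rz (T w) = w := by rw [← hKy, hKw]
    have hmem' : w ∈ Hp.domain := hRzTw ▸ hmem
    have hsub : (⟨Rz (T w), hmem⟩ : Hp.domain) = ⟨w, hmem'⟩ := Subtype.ext hRzTw
    rw [hsub, hRzTw] at hval
    have hmemH : w ∈ H.domain := hdom.symm ▸ hmem'
    refine ⟨⟨w, hmemH⟩, hw0, ?_⟩
    rw [hact w hmemH hmem']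
    have : Hp ⟨w, hmem'⟩ = T w + z • w := by rw [← hval]; abel
    rw [this]
    abel
end Aux2


section Aux3
variable {𝒳 : Type*} [NormedAddCommGroup 𝒳] [InnerProductSpace ℂ 𝒳]

lemma onsum {ι : Type*} {v : ι → 𝒳} (hv : Orthonormal ℂ v) (s : Finset ι) (g : ι → ℂ) :
    ‖∑ i ∈ s, g i • v i‖ ^ 2 = ∑ i ∈ s, ‖g i‖ ^ 2 := by
  have h : (⟪∑ i ∈ s, g i • v i, ∑ i ∈ s, g i • v i⟫ : ℂ)
      = ∑ i ∈ s, (starRingEnd ℂ) (g i) * g i := by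
    rw [sum_inner]
    refine Finset.sum_congr rfl fun i hi => ?_
    rw [inner_smul_left, hv.inner_right_sum g hi]
  rw [← inner_self_eq_norm_sq (𝕜 := ℂ), h, map_sum]
  refine Finset.sum_congr rfl fun i hi => ?_
  rw [RCLike.conj_mul]
  norm_cast
end Aux3



set_option maxHeartbeats 1000000 in
/-- Let `H₊` be selfadjoint with `0` in its resolvent set and `T` a bounded symmetric
finite-rank operator.  If `H := H₊ - T` (on `D(H₊)`) is selfadjoint, then
`σ(H) ⊂ (-∞, -ε] ∪ {0} ∪ [ε, ∞)` for some `ε > 0`. -/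
theorem stmt7 {𝒳 : Type*} [NormedAddCommGroup 𝒳] [InnerProductSpace ℂ 𝒳] [CompleteSpace 𝒳]
    (Hp : 𝒳 →ₗ.[ℂ] 𝒳) (hHp : IsSelfAdjoint Hp)
    (Hpinv : 𝒳 →L[ℂ] 𝒳)
    (hinv1 : ∀ y : 𝒳, ∃ hy : Hpinv y ∈ Hp.domain, Hp ⟨Hpinv y, hy⟩ = y)
    (hinv2 : ∀ x : Hp.domain, Hpinv (Hp x) = x)
    (T : 𝒳 →L[ℂ] 𝒳) (hTsym : ∀ x y : 𝒳, ⟪T x, y⟫ = ⟪x, T y⟫)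
    [FiniteDimensional ℂ (LinearMap.range (T : 𝒳 →ₗ[ℂ] 𝒳))]
    (H : 𝒳 →ₗ.[ℂ] 𝒳) (hdom : H.domain = Hp.domain)
    (hact : ∀ (x : 𝒳) (hx : x ∈ H.domain) (hx' : x ∈ Hp.domain),
      H ⟨x, hx⟩ = Hp ⟨x, hx'⟩ - T x)
    (hH : IsSelfAdjoint H) :
    ∃ ε : ℝ, 0 < ε ∧ ∀ z ∈ pSpectrum H, z = 0 ∨ ∃ r : ℝ, z = (r : ℂ) ∧ ε ≤ |r| := by
  classical
  by_cases htriv : ∀ y : 𝒳, y = 0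
  · refine ⟨1, one_pos, fun z hz => absurd ?_ hz⟩
    refine ⟨(0 : 𝒳 →L[ℂ] 𝒳), fun y => ?_, fun x => ?_⟩
    · have hy : (0 : 𝒳 →L[ℂ] 𝒳) y ∈ H.domain := by
        rw [ContinuousLinearMap.zero_apply]; exact zero_mem _
      exact ⟨hy, (htriv _).trans (htriv y).symm⟩
    · exact (htriv _).trans (htriv _).symm
  push_neg at htriv
  obtain ⟨y₀, hy₀⟩ := htriv
  have hc : 0 < ‖Hpinv‖ := by
    rcases eq_or_lt_of_le (norm_nonneg Hpinv) with h0 | h0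
    · exfalso
      have hpi : Hpinv = 0 := by rw [← norm_eq_zero]; exact h0.symm
      obtain ⟨hy, hval⟩ := hinv1 y₀
      apply hy₀
      rw [← hval]
      have hz0 : (⟨Hpinv y₀, hy⟩ : Hp.domain) = 0 := Subtype.ext (by simp [hpi])
      rw [hz0, LinearPMap.map_zero]
    · exact h0
  set c := ‖Hpinv‖ with hcdef
  set δ : ℝ := 1 / (2 * c) with hδdef
  have hδ : 0 < δ := by rw [hδdef]; positivity
  have hcδ : c * δ = 1 / 2 := by rw [hδdef]; field_simp
  set Sev : Set ℝ := {r : ℝ | r ≠ 0 ∧ |r| < δ ∧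
    ∃ x : H.domain, (x : 𝒳) ≠ 0 ∧ H x = (r : ℂ) • (x : 𝒳)} with hSevdef
  have hSfin : Sev.Finite := by
    have hch : ∀ r : Sev, ∃ x : 𝒳, ‖x‖ = 1 ∧ ∃ hx : x ∈ Hp.domain,
        Hp ⟨x, hx⟩ = (((r : ℝ) : ℂ)) • x + T x := by
      rintro ⟨r, hr0, hrδ, xe, hx0, hxeig⟩
      set cc : ℂ := (((‖(xe : 𝒳)‖ : ℝ) : ℂ))⁻¹ with hccdef
      set xe' : H.domain := cc • xe with hxedef
      have hcoe : (xe' : 𝒳) = cc • (xe : 𝒳) := rfl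
      have hne : ‖(xe : 𝒳)‖ ≠ 0 := norm_ne_zero_iff.mpr hx0
      have hnorm1 : ‖(xe' : 𝒳)‖ = 1 := by
        rw [hcoe, norm_smul, hccdef, norm_inv, Complex.norm_real, Real.norm_eq_abs,
          abs_of_nonneg (norm_nonneg _)]
        field_simp
      have heig' : H xe' = (((r : ℝ) : ℂ)) • (xe' : 𝒳) := by
        rw [hxedef, LinearPMap.map_smul, hxeig]
        simp only [SetLike.val_smul]
        rw [smul_smul, smul_smul, mul_comm]
      have hmemH : (xe' : 𝒳) ∈ H.domain := xe'.2
      have hmemHp : (xe' : 𝒳) ∈ Hp.domain := hdom ▸ xe'.2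
      refine ⟨(xe' : 𝒳), hnorm1, hmemHp, ?_⟩
      have hh := hact (xe' : 𝒳) hmemH hmemHp
      have hsub : (⟨(xe' : 𝒳), hmemH⟩ : H.domain) = xe' := Subtype.ext rfl
      rw [hsub, heig'] at hh
      rw [eq_sub_iff_add_eq] at hh
      exact hh.symm
    choose v hv1 hvmem hveig using hch
    have hon : Orthonormal ℂ v := by
      rw [orthonormal_iff_ite]
      intro i j
      by_cases hij : i = j
      · subst hij
        rw [if_pos rfl, inner_self_eq_norm_sq_to_K, hv1 i]
        simp
      · rw [if_neg hij]
        have hsym := sa_symm hHp ⟨v i, hvmem i⟩ ⟨v j, hvmem j⟩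
        rw [hveig i, hveig j] at hsym
        rw [inner_add_left, inner_add_right, inner_smul_left, inner_smul_right,
          hTsym (v i) (v j), Complex.conj_ofReal] at hsym
        have h5 : (((i : ℝ) : ℂ)) * ⟪v i, v j⟫ = (((j : ℝ) : ℂ)) * ⟪v i, v j⟫ := by
          linear_combination hsym
        rcases mul_eq_mul_right_iff.mp h5 with h | h
        · exfalso
          exact hij (Subtype.ext (Complex.ofReal_inj.mp h))
        · exact h
    have hli : LinearIndependent ℂ fun r : Sev => T (v r) := by
      rw [linearIndependent_iff']
      intro s g hsum i hi
      set Y : Hp.domain := ∑ j ∈ s, g j • (⟨v j, hvmem j⟩ : Hp.domain) with hYdef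
      have hYcoe : (Y : 𝒳) = ∑ j ∈ s, g j • v j := by
        rw [hYdef]
        simp
      have hTY : T (Y : 𝒳) = 0 := by
        rw [hYcoe, map_sum]
        simp_rw [map_smul]
        exact hsum
      have hHpY : Hp Y = ∑ j ∈ s, (g j * ((j : ℝ) : ℂ)) • v j := by
        have h1 : Hp Y = ∑ j ∈ s, g j • Hp ⟨v j, hvmem j⟩ := by
          rw [hYdef]
          simp only [← LinearPMap.toFun_eq_coe, map_sum, map_smul]
        rw [h1]
        have h2 : ∀ j ∈ s, g j • Hp ⟨v j, hvmem j⟩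
            = (g j * ((j : ℝ) : ℂ)) • v j + g j • T (v j) := by
          intro j hj
          rw [hveig j, smul_add, smul_smul]
        rw [Finset.sum_congr rfl h2, Finset.sum_add_distrib]
        have h3 : ∑ j ∈ s, g j • T (v j) = 0 := by
          simp_rw [← map_smul]
          rw [← map_sum, ← hYcoe, hTY]
        rw [h3, add_zero]
      have hY2 : (Y : 𝒳) = Hpinv (Hp Y) := (hinv2 Y).symm
      have hn1 : ‖(Y : 𝒳)‖ ^ 2 = ∑ j ∈ s, ‖g j‖ ^ 2 := by
        rw [hYcoe]; exact onsum hon s g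
      have hn2 : ‖Hp Y‖ ^ 2 ≤ δ ^ 2 * ∑ j ∈ s, ‖g j‖ ^ 2 := by
        rw [hHpY, onsum hon s _, Finset.mul_sum]
        apply Finset.sum_le_sum
        intro j hj
        rw [norm_mul, mul_pow]
        have habs : ‖((j : ℝ) : ℂ)‖ = |(j : ℝ)| := by
          rw [Complex.norm_real, Real.norm_eq_abs]
        rw [habs]
        have hjδ : |(j : ℝ)| < δ := j.2.2.1
        have h6 : |(j : ℝ)| ^ 2 ≤ δ ^ 2 := by nlinarith [abs_nonneg ((j : ℝ))]
        calc ‖g j‖ ^ 2 * |(j : ℝ)| ^ 2 ≤ ‖g j‖ ^ 2 * δ ^ 2 :=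
              mul_le_mul_of_nonneg_left h6 (sq_nonneg _)
          _ = δ ^ 2 * ‖g j‖ ^ 2 := by ring
      have hle1 : ‖(Y : 𝒳)‖ ≤ c * ‖Hp Y‖ := by
        calc ‖(Y : 𝒳)‖ = ‖Hpinv (Hp Y)‖ := by rw [← hY2]
          _ ≤ c * ‖Hp Y‖ := Hpinv.le_opNorm _
      have hle2 : ‖Hp Y‖ ≤ δ * ‖(Y : 𝒳)‖ := by
        have h7 : ‖Hp Y‖ ^ 2 ≤ (δ * ‖(Y : 𝒳)‖) ^ 2 := by
          rw [mul_pow, hn1]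
          exact hn2
        exact (pow_le_pow_iff_left₀ (norm_nonneg _) (by positivity) two_ne_zero).mp h7
      have hzero : ‖(Y : 𝒳)‖ = 0 := by
        have hhalf : ‖(Y : 𝒳)‖ ≤ (1 / 2) * ‖(Y : 𝒳)‖ := by
          calc ‖(Y : 𝒳)‖ ≤ c * ‖Hp Y‖ := hle1
            _ ≤ c * (δ * ‖(Y : 𝒳)‖) := by
                apply mul_le_mul_of_nonneg_left hle2 (le_of_lt hc)
            _ = (1 / 2) * ‖(Y : 𝒳)‖ := by rw [← mul_assoc, hcδ]
        linarith [norm_nonneg ((Y : 𝒳))]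
      have hsum0 : ∑ j ∈ s, ‖g j‖ ^ 2 = 0 := by rw [← hn1, hzero]; norm_num
      have hterm := (Finset.sum_eq_zero_iff_of_nonneg
        (fun j _ => sq_nonneg ‖g j‖)).mp hsum0 i hi
      have hgi : ‖g i‖ = 0 := by nlinarith [norm_nonneg (g i)]
      exact norm_eq_zero.mp hgi
    have hli2 : LinearIndependent ℂ
        (fun r : Sev => (⟨T (v r), LinearMap.mem_range_self (T : 𝒳 →ₗ[ℂ] 𝒳) (v r)⟩ :
          LinearMap.range (T : 𝒳 →ₗ[ℂ] 𝒳))) := by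
      apply LinearIndependent.of_comp (LinearMap.range (T : 𝒳 →ₗ[ℂ] 𝒳)).subtype
      exact hli
    have hfin : Finite Sev := hli2.finite
    exact Set.finite_coe_iff.mp hfin
  obtain ⟨ε, hεmem, hεmin⟩ : ∃ ε : ℝ,
      ε ∈ insert (δ / 2) (hSfin.toFinset.image fun r => |r|) ∧
      ∀ a ∈ insert (δ / 2) (hSfin.toFinset.image fun r => |r|), ε ≤ a := by
    refine ⟨(insert (δ / 2) (hSfin.toFinset.image fun r => |r|)).min'
      ⟨δ / 2, Finset.mem_insert_self _ _⟩, Finset.min'_mem _ _, fun a ha => Finset.min'_le _ a ha⟩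
  have hεpos : 0 < ε := by
    rcases Finset.mem_insert.mp hεmem with h | h
    · rw [h]; linarith
    · obtain ⟨r, hr, hre⟩ := Finset.mem_image.mp h
      rw [Set.Finite.mem_toFinset] at hr
      rw [← hre]
      exact abs_pos.mpr hr.1
  have hεle : ε ≤ δ / 2 := hεmin _ (Finset.mem_insert_self _ _)
  have hεS : ∀ r ∈ Sev, ε ≤ |r| := fun r hr =>
    hεmin _ (Finset.mem_insert_of_mem (Finset.mem_image_of_mem _ (hSfin.mem_toFinset.mpr hr)))
  refine ⟨ε, hεpos, fun z hz => ?_⟩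
  have hzim : z.im = 0 := by
    by_contra h
    exact hz (nonreal_resolvent hH h)
  have hzre : z = ((z.re : ℝ) : ℂ) := Complex.ext (by simp) (by simp [hzim])
  by_cases hz0 : z.re = 0
  · left
    rw [hzre, hz0]
    norm_num
  · right
    refine ⟨z.re, hzre, ?_⟩
    by_cases hsmall : |z.re| < δ
    · have hnorm : ‖z‖ * ‖Hpinv‖ < 1 := by
        have h1 : ‖z‖ = |z.re| := by
          conv_lhs => rw [hzre]
          rw [Complex.norm_real, Real.norm_eq_abs]
        rw [h1, ← hcdef]
        calc |z.re| * c < δ * c := mul_lt_mul_of_pos_right hsmall hc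
          _ = 1 / 2 := by rw [mul_comm]; exact hcδ
          _ < 1 := by norm_num
      rcases near_zero Hp Hpinv hinv1 hinv2 T H hdom hact z hnorm with hres | ⟨x, hx0, hxeig⟩
      · exact absurd hres hz
      · refine hεS _ ⟨hz0, hsmall, x, hx0, ?_⟩
        rw [← hzre]
        exact hxeig
    · push_neg at hsmall
      linarith
end

section
/- Let S be a selfadjoint operator on L²(ℝ) and H := iJ√S ⊗-structured, i.e., H acting on L²(ℝ) ⊕ L²(ℝ) by H(z₁,z₂) = (i√S z₂, -i√S z₁) with domain D(√S) ⊕ D(√S), where S ≥ 0. Then H is selfadjoint, and σ(H) = {ω : ω² ∈ σ(S)} (the symmetric square-root set of σ(S)). -/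
open scoped ComplexInnerProductSpace
open MeasureTheory

/-- The space `L²(ℝ)`. -/
noncomputable abbrev L2R : Type := MeasureTheory.Lp ℂ 2 (volume : Measure ℝ)

section aux
open LinearPMap
namespace Stmt10Aux
set_option linter.unusedSectionVars false
set_option maxHeartbeats 1000000

variable {E : Type*} [NormedAddCommGroup E] [InnerProductSpace ℂ E] [CompleteSpace E]

local notation "𝒳" => WithLp 2 (E × E)

lemma prodX_ext {x y : WithLp 2 (E × E)} (h1 : x.fst = y.fst) (h2 : x.snd = y.snd) : x = y :=
  WithLp.ofLp_injective 2 (Prod.ext h1 h2)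

section pmap
variable {F : Type*} [NormedAddCommGroup F] [NormedSpace ℂ F]

lemma pmap_congr' (T : F →ₗ.[ℂ] F) {a : F} (ha : a ∈ T.domain) (x : T.domain)
    (h : a = (x : F)) : T ⟨a, ha⟩ = T x := by
  cases x; subst h; rfl

lemma pmap_smul (T : F →ₗ.[ℂ] F) (c : ℂ) (a : F) (ha : a ∈ T.domain) (h : c • a ∈ T.domain) :
    T ⟨c • a, h⟩ = c • T ⟨a, ha⟩ := by
  have h0 : (⟨c • a, h⟩ : T.domain) = c • ⟨a, ha⟩ := Subtype.ext rfl
  rw [h0, T.map_smul]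

lemma pmap_neg (T : F →ₗ.[ℂ] F) (a : F) (ha : a ∈ T.domain) (h : -a ∈ T.domain) :
    T ⟨-a, h⟩ = -(T ⟨a, ha⟩) := by
  have h0 : (⟨-a, h⟩ : T.domain) = -(⟨a, ha⟩ : T.domain) := Subtype.ext rfl
  rw [h0, LinearPMap.map_neg]

lemma pmap_sub (T : F →ₗ.[ℂ] F) (a b : F) (ha : a ∈ T.domain) (hb : b ∈ T.domain)
    (h : a - b ∈ T.domain) : T ⟨a - b, h⟩ = T ⟨a, ha⟩ - T ⟨b, hb⟩ := by
  have h0 : (⟨a - b, h⟩ : T.domain) = (⟨a, ha⟩ : T.domain) - ⟨b, hb⟩ := Subtype.ext rfl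
  rw [h0, T.map_sub]

lemma pmap_lincomb (T : F →ₗ.[ℂ] F) (c d : ℂ) (a b : F) (ha : a ∈ T.domain) (hb : b ∈ T.domain)
    (h : c • a + d • b ∈ T.domain) :
    T ⟨c • a + d • b, h⟩ = c • T ⟨a, ha⟩ + d • T ⟨b, hb⟩ := by
  have : (⟨c • a + d • b, h⟩ : T.domain) = c • ⟨a, ha⟩ + d • ⟨b, hb⟩ := Subtype.ext rfl
  rw [this, T.map_add, T.map_smul, T.map_smul]

end pmap

lemma neg_neg_neg_smul {c : ℂ} {x : E} : -(-c • x) = c • x := by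
  rw [neg_smul, neg_neg]

lemma mem_of_I_smul {D : Submodule ℂ E} {x : E} (h : Complex.I • x ∈ D) : x ∈ D := by
  have := D.smul_mem (Complex.I⁻¹) h
  rwa [smul_smul, inv_mul_cancel₀ Complex.I_ne_zero, one_smul] at this

section main

variable (S sqrtS : E →ₗ.[ℂ] E)
  (hsqrt : IsSelfAdjoint sqrtS)
  (hdom : ∀ x : E, x ∈ S.domain ↔ ∃ hx : x ∈ sqrtS.domain, sqrtS ⟨x, hx⟩ ∈ sqrtS.domain)
  (hsq : ∀ (x : E) (hx : x ∈ sqrtS.domain) (hx2 : sqrtS ⟨x, hx⟩ ∈ sqrtS.domain)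
      (hxS : x ∈ S.domain), S ⟨x, hxS⟩ = sqrtS ⟨sqrtS ⟨x, hx⟩, hx2⟩)
  (H : WithLp 2 (E × E) →ₗ.[ℂ] WithLp 2 (E × E))
  (hHdom : ∀ p : WithLp 2 (E × E), p ∈ H.domain ↔
      (WithLp.equiv 2 (E × E) p).1 ∈ sqrtS.domain ∧
      (WithLp.equiv 2 (E × E) p).2 ∈ sqrtS.domain)
  (hHact : ∀ (p : H.domain)
      (h1 : (WithLp.equiv 2 (E × E) (p : WithLp 2 (E × E))).1 ∈ sqrtS.domain)
      (h2 : (WithLp.equiv 2 (E × E) (p : WithLp 2 (E × E))).2 ∈ sqrtS.domain),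
      H p = (WithLp.equiv 2 (E × E)).symm
        (Complex.I • sqrtS ⟨(WithLp.equiv 2 (E × E) (p : WithLp 2 (E × E))).2, h2⟩,
         -(Complex.I • sqrtS ⟨(WithLp.equiv 2 (E × E) (p : WithLp 2 (E × E))).1, h1⟩)))

include hsqrt in
lemma sqrt_symm : ∀ (x y : E) (hx : x ∈ sqrtS.domain) (hy : y ∈ sqrtS.domain),
    ⟪sqrtS ⟨x, hx⟩, y⟫ = ⟪x, sqrtS ⟨y, hy⟩⟫ := by
  have hd : Dense (sqrtS.domain : Set E) := hsqrt.dense_domain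
  have h := sqrtS.adjoint_isFormalAdjoint hd
  rw [LinearPMap.isSelfAdjoint_def.mp hsqrt] at h
  exact fun x y hx hy => h ⟨x, hx⟩ ⟨y, hy⟩

include hHdom hHact in
lemma Hfst (p : H.domain) (x : sqrtS.domain) (hx : (p : 𝒳).snd = (x : E)) :
    (H p).fst = Complex.I • sqrtS x := by
  obtain ⟨g1, g2⟩ := (hHdom _).mp p.2
  rw [hHact p g1 g2]
  show Complex.I • sqrtS ⟨_, g2⟩ = _
  congr 1
  exact congrArg _ (Subtype.ext hx)

include hHdom hHact in
lemma Hsnd (p : H.domain) (x : sqrtS.domain) (hx : (p : 𝒳).fst = (x : E)) :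
    (H p).snd = -(Complex.I • sqrtS x) := by
  obtain ⟨g1, g2⟩ := (hHdom _).mp p.2
  rw [hHact p g1 g2]
  show -(Complex.I • sqrtS ⟨_, g1⟩) = _
  congr 2
  exact congrArg _ (Subtype.ext hx)

include hHdom hHact hsqrt in
lemma H_symm : H.IsFormalAdjoint H := by
  intro p q
  obtain ⟨p1, p2⟩ := (hHdom _).mp p.2
  obtain ⟨q1, q2⟩ := (hHdom _).mp q.2
  have p1' : (p : 𝒳).fst ∈ sqrtS.domain := p1
  have p2' : (p : 𝒳).snd ∈ sqrtS.domain := p2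
  have q1' : (q : 𝒳).fst ∈ sqrtS.domain := q1
  have q2' : (q : 𝒳).snd ∈ sqrtS.domain := q2
  rw [WithLp.prod_inner_apply]
  rw [WithLp.prod_inner_apply]
  simp only [WithLp.ofLp_fst, WithLp.ofLp_snd]
  rw [Hfst sqrtS H hHdom hHact p ⟨_, p2'⟩ rfl]
  rw [Hsnd sqrtS H hHdom hHact p ⟨_, p1'⟩ rfl]
  rw [Hfst sqrtS H hHdom hHact q ⟨_, q2'⟩ rfl]
  rw [Hsnd sqrtS H hHdom hHact q ⟨_, q1'⟩ rfl]
  rw [inner_smul_left, inner_neg_left, inner_smul_left, inner_neg_right,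
    inner_smul_right, inner_smul_right]
  rw [sqrt_symm sqrtS hsqrt _ _ p2' q1', sqrt_symm sqrtS hsqrt _ _ p1' q2', Complex.conj_I]
  ring

include hHdom hHact hsqrt in
lemma H_selfadjoint : IsSelfAdjoint H := by
  have hd : Dense (sqrtS.domain : Set E) := hsqrt.dense_domain
  have hdH : Dense (H.domain : Set 𝒳) := by
    have hset : (H.domain : Set 𝒳) =
        (WithLp.equiv 2 (E × E)) ⁻¹' ((sqrtS.domain : Set E) ×ˢ (sqrtS.domain : Set E)) := by
      ext p
      exact (hHdom p).trans Iff.rfl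
    rw [hset]
    exact (hd.prod hd).preimage (WithLp.prodContinuousLinearEquiv 2 ℂ E E).toHomeomorph.isOpenMap
  have hle : H ≤ H† := (H_symm sqrtS hsqrt H hHdom hHact).le_adjoint hdH
  rw [LinearPMap.isSelfAdjoint_def]
  have hdomle : H†.domain ≤ H.domain := by
    intro q hq
    have hfa := H.adjoint_isFormalAdjoint hdH
    set w : 𝒳 := H† ⟨q, hq⟩ with hw
    have key : ∀ p : H.domain, ⟪w, (p : 𝒳)⟫ = ⟪q, H p⟫ := fun p => hfa ⟨q, hq⟩ p
    rw [hHdom]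
    constructor
    · -- q.fst ∈ sqrtS.domain, test against p = (0, x)
      have : q.fst ∈ sqrtS†.domain := by
        apply LinearPMap.mem_adjoint_domain_of_exists
        refine ⟨Complex.I • (w : 𝒳).snd, fun x => ?_⟩
        have hxmem : ((WithLp.equiv 2 (E × E)).symm ((0 : E), (x : E))) ∈ H.domain := by
          rw [hHdom]; exact ⟨sqrtS.domain.zero_mem, x.2⟩
        set p' : H.domain := ⟨_, hxmem⟩ with hp'
        have h := key p'
        rw [WithLp.prod_inner_apply] at h
        rw [WithLp.prod_inner_apply] at h
        simp only [WithLp.ofLp_fst, WithLp.ofLp_snd] at h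
        rw [Hfst sqrtS H hHdom hHact p' x rfl] at h
        rw [Hsnd sqrtS H hHdom hHact p' 0 rfl] at h
        have hc1 : ((p' : 𝒳)).fst = (0 : E) := rfl
        have hc2 : ((p' : 𝒳)).snd = (x : E) := rfl
        rw [hc1, hc2, LinearPMap.map_zero] at h
        simp only [smul_zero, neg_zero, inner_zero_right, add_zero, zero_add,
          inner_smul_right] at h
        rw [inner_smul_left, h, Complex.conj_I]
        ring_nf
        rw [Complex.I_sq]
        ring
      rwa [LinearPMap.isSelfAdjoint_def.mp hsqrt] at this
    · have : q.snd ∈ sqrtS†.domain := by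
        apply LinearPMap.mem_adjoint_domain_of_exists
        refine ⟨-(Complex.I • (w : 𝒳).fst), fun x => ?_⟩
        have hxmem : ((WithLp.equiv 2 (E × E)).symm ((x : E), (0 : E))) ∈ H.domain := by
          rw [hHdom]; exact ⟨x.2, sqrtS.domain.zero_mem⟩
        set p' : H.domain := ⟨_, hxmem⟩ with hp'
        have h := key p'
        rw [WithLp.prod_inner_apply] at h
        rw [WithLp.prod_inner_apply] at h
        simp only [WithLp.ofLp_fst, WithLp.ofLp_snd] at h
        rw [Hfst sqrtS H hHdom hHact p' 0 rfl] at h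
        rw [Hsnd sqrtS H hHdom hHact p' x rfl] at h
        have hc1 : ((p' : 𝒳)).fst = (x : E) := rfl
        have hc2 : ((p' : 𝒳)).snd = (0 : E) := rfl
        rw [hc1, hc2, LinearPMap.map_zero] at h
        simp only [smul_zero, neg_zero, inner_zero_right, add_zero, zero_add,
          inner_smul_right, inner_neg_right] at h
        rw [inner_neg_left, inner_smul_left, h, Complex.conj_I]
        ring_nf
        rw [Complex.I_sq]
        ring
      rwa [LinearPMap.isSelfAdjoint_def.mp hsqrt] at this
  exact (LinearPMap.eq_of_le_of_domain_eq hle (le_antisymm hle.1 hdomle)).symm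

include hsqrt hdom hsq hHdom hHact in
lemma res_H_of_res_S (z : ℂ) (h : IsInResolventSet S (z ^ 2)) : IsInResolventSet H z := by
  classical
  obtain ⟨R, hR1, hR2⟩ := h
  have hmemS : ∀ y, R y ∈ S.domain := fun y => (hR1 y).choose
  have hRy : ∀ y, S ⟨R y, hmemS y⟩ - z ^ 2 • R y = y := fun y => (hR1 y).choose_spec
  have hmem1 : ∀ y, R y ∈ sqrtS.domain := fun y => ((hdom (R y)).mp (hmemS y)).choose
  have hmem2 : ∀ y, sqrtS ⟨R y, hmem1 y⟩ ∈ sqrtS.domain :=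
    fun y => ((hdom (R y)).mp (hmemS y)).choose_spec
  have hLS : ∀ y, sqrtS ⟨sqrtS ⟨R y, hmem1 y⟩, hmem2 y⟩ = S ⟨R y, hmemS y⟩ :=
    fun y => (hsq _ _ _ _).symm
  -- the bounded operator √S ∘ R
  set Lfun : E →ₗ[ℂ] E :=
    { toFun := fun y => sqrtS ⟨R y, hmem1 y⟩
      map_add' := by
        intro a b
        have h0 : (⟨R (a + b), hmem1 _⟩ : sqrtS.domain) = ⟨R a, hmem1 a⟩ + ⟨R b, hmem1 b⟩ :=
          Subtype.ext (by simp)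
        show sqrtS ⟨R (a + b), hmem1 _⟩ = sqrtS ⟨R a, hmem1 a⟩ + sqrtS ⟨R b, hmem1 b⟩
        rw [h0, sqrtS.map_add]
      map_smul' := by
        intro c a
        have h0 : (⟨R (c • a), hmem1 _⟩ : sqrtS.domain) = c • ⟨R a, hmem1 a⟩ :=
          Subtype.ext (by simp)
        show sqrtS ⟨R (c • a), hmem1 _⟩ = c • sqrtS ⟨R a, hmem1 a⟩
        rw [h0, sqrtS.map_smul] } with hLfun
  have hSapp : ∀ y, S ⟨R y, hmemS y⟩ = y + z ^ 2 • R y := by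
    intro y
    exact eq_add_of_sub_eq (hRy y)
  have hb : ∀ y, ‖Lfun y‖ ^ 2 ≤ (‖R‖ + ‖z‖ ^ 2 * ‖R‖ ^ 2) * ‖y‖ ^ 2 := by
    intro y
    have e1 : ‖Lfun y‖ ^ 2 = (⟪Lfun y, Lfun y⟫).re :=
      (inner_self_eq_norm_sq (𝕜 := ℂ) (x := Lfun y)).symm
    have e2 : ⟪Lfun y, Lfun y⟫ = ⟪(y : E), R y⟫ + (starRingEnd ℂ) (z ^ 2) * ⟪R y, R y⟫ := by
      have h3 : ⟪Lfun y, Lfun y⟫ = ⟪sqrtS ⟨sqrtS ⟨R y, hmem1 y⟩, hmem2 y⟩, R y⟫ :=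
        (sqrt_symm sqrtS hsqrt _ _ (hmem2 y) (hmem1 y)).symm
      rw [h3, hLS y, hSapp y, inner_add_left, inner_smul_left]
    have e3 : (⟪(y : E), R y⟫).re ≤ ‖y‖ * ‖R y‖ := re_inner_le_norm (𝕜 := ℂ) _ _
    have e4 : ((starRingEnd ℂ) (z ^ 2) * ⟪R y, R y⟫).re = (z ^ 2).re * ‖R y‖ ^ 2 := by
      have hinner : ⟪R y, R y⟫ = ((‖R y‖ ^ 2 : ℝ) : ℂ) := by
        rw [inner_self_eq_norm_sq_to_K]; norm_cast
      rw [hinner, Complex.mul_re, Complex.ofReal_re, Complex.ofReal_im, Complex.conj_re,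
        Complex.conj_im]
      ring
    have e5 : (z ^ 2).re ≤ ‖z‖ ^ 2 := by
      calc (z ^ 2).re ≤ ‖z ^ 2‖ := Complex.re_le_norm _
        _ = ‖z‖ ^ 2 := by rw [norm_pow]
    have hRn : ‖R y‖ ≤ ‖R‖ * ‖y‖ := R.le_opNorm y
    have h6 : ‖R y‖ ^ 2 ≤ (‖R‖ * ‖y‖) ^ 2 := by
      have := pow_le_pow_left₀ (norm_nonneg (R y)) hRn 2
      simpa using this
    rw [e1, e2, Complex.add_re, e4]
    have h7 : (z ^ 2).re * ‖R y‖ ^ 2 ≤ ‖z‖ ^ 2 * (‖R‖ * ‖y‖) ^ 2 := by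
      nlinarith [sq_nonneg ‖R y‖, sq_nonneg ‖z‖, sq_nonneg (‖R‖ * ‖y‖)]
    have h8 : (⟪(y : E), R y⟫).re ≤ ‖y‖ * (‖R‖ * ‖y‖) := by
      calc (⟪(y : E), R y⟫).re ≤ ‖y‖ * ‖R y‖ := e3
        _ ≤ ‖y‖ * (‖R‖ * ‖y‖) := by nlinarith [norm_nonneg y]
    nlinarith [norm_nonneg y, norm_nonneg R]
  have hC : (0:ℝ) ≤ ‖R‖ + ‖z‖ ^ 2 * ‖R‖ ^ 2 := by positivity
  set L : E →L[ℂ] E := Lfun.mkContinuous (Real.sqrt (‖R‖ + ‖z‖ ^ 2 * ‖R‖ ^ 2)) (by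
    intro y
    have h2 := hb y
    have := Real.sqrt_le_sqrt h2
    rwa [Real.sqrt_sq (norm_nonneg _), Real.sqrt_mul hC, Real.sqrt_sq (norm_nonneg _)] at this)
    with hL
  have hLapp : ∀ y : E, L y = sqrtS ⟨R y, hmem1 y⟩ := fun y => rfl
  -- the resolvent candidate for H
  set π := WithLp.prodContinuousLinearEquiv 2 ℂ E E with hπ
  set A : (E × E) →L[ℂ] (E × E) :=
    ((Complex.I • L).comp (ContinuousLinearMap.snd ℂ E E)
      + (z • R).comp (ContinuousLinearMap.fst ℂ E E)).prod
    (((-Complex.I) • L).comp (ContinuousLinearMap.fst ℂ E E)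
      + (z • R).comp (ContinuousLinearMap.snd ℂ E E)) with hA
  set Q : WithLp 2 (E × E) →L[ℂ] WithLp 2 (E × E) :=
    (π.symm.toContinuousLinearMap.comp A).comp π.toContinuousLinearMap with hQdef
  have hQfst : ∀ y : 𝒳, (Q y).fst = Complex.I • L y.snd + z • R y.fst := fun y => rfl
  have hQsnd : ∀ y : 𝒳, (Q y).snd = (-Complex.I) • L y.fst + z • R y.snd := fun y => rfl
  -- membership of Q y in the domain of H
  have hQmem : ∀ y : 𝒳, Q y ∈ H.domain := by
    intro y
    rw [hHdom]
    constructor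
    · show Complex.I • L y.snd + z • R y.fst ∈ sqrtS.domain
      exact add_mem (Submodule.smul_mem _ _ (hmem2 y.snd)) (Submodule.smul_mem _ _ (hmem1 y.fst))
    · show (-Complex.I) • L y.fst + z • R y.snd ∈ sqrtS.domain
      exact add_mem (Submodule.smul_mem _ _ (hmem2 y.fst)) (Submodule.smul_mem _ _ (hmem1 y.snd))
  have hmemL : ∀ a : E, L a ∈ sqrtS.domain := fun a => hmem2 a
  -- right inverse property
  have prop1 : ∀ y : 𝒳, H ⟨Q y, hQmem y⟩ - z • Q y = y := by
    intro y
    apply prodX_ext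
    · -- first components
      have hfst := Hfst sqrtS H hHdom hHact ⟨Q y, hQmem y⟩
        ⟨(-Complex.I) • L y.fst + z • R y.snd,
          add_mem (Submodule.smul_mem _ _ (hmem2 y.fst)) (Submodule.smul_mem _ _ (hmem1 y.snd))⟩
        (hQsnd y)
      show (H ⟨Q y, hQmem y⟩).fst - z • (Q y).fst = y.fst
      rw [hfst, hQfst,
        pmap_lincomb sqrtS (-Complex.I) z (L y.fst) (R y.snd) (hmemL y.fst) (hmem1 y.snd) _]
      have hL1 : sqrtS ⟨L y.fst, hmemL y.fst⟩ = S ⟨R y.fst, hmemS y.fst⟩ := by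
        rw [← hLS y.fst]
        exact pmap_congr' sqrtS _ _ rfl
      rw [hL1, hLapp y.snd]
      conv_rhs => rw [← hRy y.fst]
      rw [smul_add, smul_smul, smul_smul,
        show Complex.I * -Complex.I = (1 : ℂ) by rw [mul_neg, Complex.I_mul_I, neg_neg],
        one_smul]
      module
    · -- second components
      have hsnd := Hsnd sqrtS H hHdom hHact ⟨Q y, hQmem y⟩
        ⟨Complex.I • L y.snd + z • R y.fst,
          add_mem (Submodule.smul_mem _ _ (hmem2 y.snd)) (Submodule.smul_mem _ _ (hmem1 y.fst))⟩
        (hQfst y)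
      show (H ⟨Q y, hQmem y⟩).snd - z • (Q y).snd = y.snd
      rw [hsnd, hQsnd,
        pmap_lincomb sqrtS Complex.I z (L y.snd) (R y.fst) (hmemL y.snd) (hmem1 y.fst) _]
      have hL2 : sqrtS ⟨L y.snd, hmemL y.snd⟩ = S ⟨R y.snd, hmemS y.snd⟩ := by
        rw [← hLS y.snd]
        exact pmap_congr' sqrtS _ _ rfl
      rw [hL2, hLapp y.fst]
      conv_rhs => rw [← hRy y.snd]
      rw [smul_add, smul_smul, smul_smul, Complex.I_mul_I]
      module
  -- injectivity of H - z
  have hinj : ∀ w : H.domain, H w = z • (w : 𝒳) → (w : 𝒳) = (0 : 𝒳) := by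
    intro w hw
    obtain ⟨m1, m2⟩ := (hHdom _).mp w.2
    have m1' : ((w : 𝒳)).fst ∈ sqrtS.domain := m1
    have m2' : ((w : 𝒳)).snd ∈ sqrtS.domain := m2
    have hf : (H w).fst = Complex.I • sqrtS ⟨(w : 𝒳).snd, m2'⟩ :=
      Hfst sqrtS H hHdom hHact w ⟨_, m2'⟩ rfl
    have hs : (H w).snd = -(Complex.I • sqrtS ⟨(w : 𝒳).fst, m1'⟩) :=
      Hsnd sqrtS H hHdom hHact w ⟨_, m1'⟩ rfl
    have heq1 : Complex.I • sqrtS ⟨(w : 𝒳).snd, m2'⟩ = z • (w : 𝒳).fst := by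
      rw [← hf, hw]; rfl
    have heq2 : -(Complex.I • sqrtS ⟨(w : 𝒳).fst, m1'⟩) = z • (w : 𝒳).snd := by
      rw [← hs, hw]; rfl
    have hs2 : sqrtS ⟨(w : 𝒳).snd, m2'⟩ = (-Complex.I * z) • (w : 𝒳).fst := by
      have h' := congrArg (fun v : E => (-Complex.I) • v) heq1
      simp only [smul_smul, neg_mul, Complex.I_mul_I, neg_neg, one_smul] at h'
      rw [h']
      congr 1
      ring
    have hs1 : sqrtS ⟨(w : 𝒳).fst, m1'⟩ = (Complex.I * z) • (w : 𝒳).snd := by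
      have h0 : Complex.I • sqrtS ⟨(w : 𝒳).fst, m1'⟩ = -(z • (w : 𝒳).snd) := by
        rw [← heq2, neg_neg]
      have h' := congrArg (fun v : E => (-Complex.I) • v) h0
      simp only [smul_neg, smul_smul, neg_mul, Complex.I_mul_I, neg_neg, one_smul] at h'
      rw [h', neg_neg_neg_smul]
    -- w.fst is in the domain of S and is an eigenvector
    have hw1S : (w : 𝒳).fst ∈ S.domain := by
      rw [hdom]
      refine ⟨m1', ?_⟩
      rw [hs1]
      exact Submodule.smul_mem _ _ m2'
    have hw2S : (w : 𝒳).snd ∈ S.domain := by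
      rw [hdom]
      refine ⟨m2', ?_⟩
      rw [hs2]
      exact Submodule.smul_mem _ _ m1'
    have hSm1 : sqrtS ⟨(w : 𝒳).fst, m1'⟩ ∈ sqrtS.domain := by
      rw [hs1]; exact Submodule.smul_mem _ _ m2'
    have hSm2 : sqrtS ⟨(w : 𝒳).snd, m2'⟩ ∈ sqrtS.domain := by
      rw [hs2]; exact Submodule.smul_mem _ _ m1'
    have hfe : S ⟨(w : 𝒳).fst, hw1S⟩ = z ^ 2 • (w : 𝒳).fst := by
      rw [hsq _ m1' hSm1 hw1S]
      rw [pmap_congr' sqrtS hSm1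
        ⟨(Complex.I * z) • (w : 𝒳).snd, Submodule.smul_mem _ _ m2'⟩ hs1]
      rw [pmap_smul sqrtS (Complex.I * z) _ m2' _]
      rw [hs2, smul_smul]
      congr 1
      rw [show Complex.I * z * (-Complex.I * z) = -(Complex.I * Complex.I) * z ^ 2 by ring,
        Complex.I_mul_I, neg_neg, one_mul]
    have hse : S ⟨(w : 𝒳).snd, hw2S⟩ = z ^ 2 • (w : 𝒳).snd := by
      rw [hsq _ m2' hSm2 hw2S]
      rw [pmap_congr' sqrtS hSm2
        ⟨(-Complex.I * z) • (w : 𝒳).fst, Submodule.smul_mem _ _ m1'⟩ hs2]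
      rw [pmap_smul sqrtS (-Complex.I * z) _ m1' _]
      rw [hs1, smul_smul]
      congr 1
      rw [show -Complex.I * z * (Complex.I * z) = -(Complex.I * Complex.I) * z ^ 2 by ring,
        Complex.I_mul_I, neg_neg, one_mul]
    have hz1 : (w : 𝒳).fst = 0 := by
      have := hR2 ⟨(w : 𝒳).fst, hw1S⟩
      rw [hfe] at this
      simpa using this.symm
    have hz2 : (w : 𝒳).snd = 0 := by
      have := hR2 ⟨(w : 𝒳).snd, hw2S⟩
      rw [hse] at this
      simpa using this.symm
    exact prodX_ext hz1 hz2
  refine ⟨Q, fun y => ⟨hQmem y, prop1 y⟩, ?_⟩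
  -- left inverse via injectivity
  intro x
  have hg := prop1 (H x - z • (x : 𝒳))
  set g : 𝒳 := H x - z • (x : 𝒳) with hgdef
  have hdmem : Q g - (x : 𝒳) ∈ H.domain := sub_mem (hQmem g) x.2
  have hdeq : H ⟨Q g - (x : 𝒳), hdmem⟩ = z • (Q g - (x : 𝒳)) := by
    have hsplit : (⟨Q g - (x : 𝒳), hdmem⟩ : H.domain) = ⟨Q g, hQmem g⟩ - x := Subtype.ext rfl
    rw [hsplit, H.map_sub]
    have h1 : H ⟨Q g, hQmem g⟩ = g + z • Q g := eq_add_of_sub_eq hg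
    rw [h1, hgdef]
    rw [smul_sub]
    abel
  have := hinj ⟨_, hdmem⟩ hdeq
  have h0 : Q g - (x : 𝒳) = 0 := this
  have := sub_eq_zero.mp h0
  exact this

include hsqrt hdom hsq hHdom hHact in
lemma res_S_of_res_H (z : ℂ) (h : IsInResolventSet H z) : IsInResolventSet S (z ^ 2) := by
  classical
  obtain ⟨Q, hQ1, hQ2⟩ := h
  have hQmem : ∀ y : 𝒳, Q y ∈ H.domain := fun y => (hQ1 y).choose
  have hQeq : ∀ y : 𝒳, H ⟨Q y, hQmem y⟩ - z • Q y = y := fun y => (hQ1 y).choose_spec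
  set π := WithLp.prodContinuousLinearEquiv 2 ℂ E E with hπ
  set U : WithLp 2 (E × E) →L[ℂ] WithLp 2 (E × E) := (π.symm.toContinuousLinearMap.comp
      ((ContinuousLinearMap.fst ℂ E E).prod (-(ContinuousLinearMap.snd ℂ E E)))).comp
      π.toContinuousLinearMap with hUdef
  have hUfst : ∀ y : 𝒳, (U y).fst = y.fst := fun y => rfl
  have hUsnd : ∀ y : 𝒳, (U y).snd = -y.snd := fun y => rfl
  have hUU : ∀ y : 𝒳, U (U y) = y := fun y => prodX_ext rfl (neg_neg y.snd)
  have hUmem : ∀ p : 𝒳, p ∈ H.domain → U p ∈ H.domain := by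
    intro p hp
    obtain ⟨m1, m2⟩ := (hHdom p).mp hp
    rw [hHdom]
    exact ⟨m1, neg_mem m2⟩
  have hUH : ∀ (p : H.domain) (hU : U (p : 𝒳) ∈ H.domain),
      H ⟨U (p : 𝒳), hU⟩ = -(U (H p)) := by
    intro p hU
    obtain ⟨m1, m2⟩ := (hHdom _).mp p.2
    have m1' : ((p : 𝒳)).fst ∈ sqrtS.domain := m1
    have m2' : ((p : 𝒳)).snd ∈ sqrtS.domain := m2
    apply prodX_ext
    · show (H ⟨U (p : 𝒳), hU⟩).fst = -((H p).fst)
      rw [Hfst sqrtS H hHdom hHact ⟨U (p : 𝒳), hU⟩ (-(⟨(p : 𝒳).snd, m2'⟩ : sqrtS.domain)) rfl,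
        Hfst sqrtS H hHdom hHact p ⟨_, m2'⟩ rfl, LinearPMap.map_neg, smul_neg]
    · show (H ⟨U (p : 𝒳), hU⟩).snd = -(-((H p).snd))
      rw [neg_neg, Hsnd sqrtS H hHdom hHact ⟨U (p : 𝒳), hU⟩ ⟨(p : 𝒳).fst, m1'⟩ rfl,
        Hsnd sqrtS H hHdom hHact p ⟨_, m1'⟩ rfl]
  set Q' : WithLp 2 (E × E) →L[ℂ] WithLp 2 (E × E) := -(U.comp (Q.comp U)) with hQ'def
  have hQ'apply : ∀ y : 𝒳, Q' y = -(U (Q (U y))) := fun y => rfl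
  have hQ'mem : ∀ y : 𝒳, Q' y ∈ H.domain := fun y => neg_mem (hUmem _ (hQmem (U y)))
  have hQ'eq : ∀ y : 𝒳, H ⟨Q' y, hQ'mem y⟩ + z • Q' y = y := by
    intro y
    have hm : U (Q (U y)) ∈ H.domain := hUmem _ (hQmem (U y))
    have e1 : H ⟨Q' y, hQ'mem y⟩ = -(H ⟨U (Q (U y)), hm⟩) := by
      have h0 : (⟨Q' y, hQ'mem y⟩ : H.domain) = -(⟨U (Q (U y)), hm⟩ : H.domain) :=
        Subtype.ext rfl
      rw [h0, LinearPMap.map_neg]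
    rw [e1, hUH ⟨Q (U y), hQmem (U y)⟩ hm, neg_neg]
    have e2 : z • Q' y = -(z • U (Q (U y))) := by rw [hQ'apply, smul_neg]
    rw [e2]
    have e3 : U (H ⟨Q (U y), hQmem (U y)⟩) + -(z • U (Q (U y)))
        = U (H ⟨Q (U y), hQmem (U y)⟩ - z • Q (U y)) := by
      rw [_root_.map_sub, _root_.map_smul, sub_eq_add_neg]
    rw [e3, hQeq (U y), hUU]
  have hQ'left : ∀ p : H.domain, Q' (H p + z • (p : 𝒳)) = p := by
    intro p
    have hUp : U (p : 𝒳) ∈ H.domain := hUmem _ p.2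
    have h4 : U (H p) = -(H ⟨U (p : 𝒳), hUp⟩) := by rw [hUH p hUp, neg_neg]
    have e0 : U (H p + z • (p : 𝒳)) = -(H ⟨U (p : 𝒳), hUp⟩ - z • U (p : 𝒳)) := by
      rw [_root_.map_add, _root_.map_smul, h4]
      module
    rw [hQ'apply, e0, _root_.map_neg, _root_.map_neg, neg_neg, hQ2 ⟨U (p : 𝒳), hUp⟩, hUU]
  -- the resolvent candidate for S
  set Rm : E →L[ℂ] E := (ContinuousLinearMap.fst ℂ E E).comp
    (π.toContinuousLinearMap.comp ((Q.comp Q').comp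
      (π.symm.toContinuousLinearMap.comp (ContinuousLinearMap.inl ℂ E E)))) with hRmdef
  refine ⟨Rm, fun y => ?_, fun x => ?_⟩
  · -- right inverse
    set g : WithLp 2 (E × E) := π.symm (y, 0) with hgdef
    have hveq := hQeq (Q' g)
    have hweq := hQ'eq g
    obtain ⟨m1, m2⟩ := (hHdom _).mp (hQmem (Q' g))
    have m1' : (Q (Q' g)).fst ∈ sqrtS.domain := m1
    have m2' : (Q (Q' g)).snd ∈ sqrtS.domain := m2
    have hvm := hQmem (Q' g)
    have hHv_eq : H ⟨Q (Q' g), hvm⟩ = Q' g + z • Q (Q' g) := eq_add_of_sub_eq hveq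
    have hHv_mem : H ⟨Q (Q' g), hvm⟩ ∈ H.domain := by
      rw [hHv_eq]
      exact add_mem (hQ'mem g) (Submodule.smul_mem _ _ hvm)
    have hvfst : (H ⟨Q (Q' g), hvm⟩).fst = Complex.I • sqrtS ⟨(Q (Q' g)).snd, m2'⟩ :=
      Hfst sqrtS H hHdom hHact ⟨Q (Q' g), hvm⟩ ⟨_, m2'⟩ rfl
    have hvsnd : (H ⟨Q (Q' g), hvm⟩).snd = -(Complex.I • sqrtS ⟨(Q (Q' g)).fst, m1'⟩) :=
      Hsnd sqrtS H hHdom hHact ⟨Q (Q' g), hvm⟩ ⟨_, m1'⟩ rfl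
    obtain ⟨n1, n2⟩ := (hHdom _).mp hHv_mem
    have n2' : (H ⟨Q (Q' g), hvm⟩).snd ∈ sqrtS.domain := n2
    have hsm1 : sqrtS ⟨(Q (Q' g)).fst, m1'⟩ ∈ sqrtS.domain := by
      have hn : -(Complex.I • sqrtS ⟨(Q (Q' g)).fst, m1'⟩) ∈ sqrtS.domain := by
        rw [← hvsnd]; exact n2'
      exact mem_of_I_smul (neg_mem_iff.mp hn)
    have hv1S : (Q (Q' g)).fst ∈ S.domain := (hdom _).mpr ⟨m1', hsm1⟩
    refine ⟨hv1S, ?_⟩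
    show S ⟨(Q (Q' g)).fst, hv1S⟩ - z ^ 2 • (Q (Q' g)).fst = y
    -- H (H v) first component
    have hHHv_fst : (H ⟨H ⟨Q (Q' g), hvm⟩, hHv_mem⟩).fst
        = Complex.I • sqrtS ⟨(H ⟨Q (Q' g), hvm⟩).snd, n2'⟩ :=
      Hfst sqrtS H hHdom hHact ⟨H ⟨Q (Q' g), hvm⟩, hHv_mem⟩ ⟨_, n2'⟩ rfl
    have hstep : sqrtS ⟨(H ⟨Q (Q' g), hvm⟩).snd, n2'⟩
        = -(Complex.I • S ⟨(Q (Q' g)).fst, hv1S⟩) := by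
      rw [pmap_congr' sqrtS n2'
        ⟨-(Complex.I • sqrtS ⟨(Q (Q' g)).fst, m1'⟩), by rw [← hvsnd]; exact n2'⟩ hvsnd]
      rw [pmap_neg sqrtS _ (Submodule.smul_mem _ _ hsm1) _]
      rw [pmap_smul sqrtS Complex.I _ hsm1 _]
      rw [← hsq _ m1' hsm1 hv1S]
    -- H w expressed via H (H v)
    have hwsub_mem : (H ⟨Q (Q' g), hvm⟩ : 𝒳) - z • Q (Q' g) ∈ H.domain := by
      rw [hveq]; exact hQ'mem g
    have hHweq : H ⟨Q' g, hQ'mem g⟩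
        = H ⟨H ⟨Q (Q' g), hvm⟩, hHv_mem⟩ - z • H ⟨Q (Q' g), hvm⟩ := by
      rw [pmap_congr' H (hQ'mem g) ⟨(H ⟨Q (Q' g), hvm⟩ : 𝒳) - z • Q (Q' g), hwsub_mem⟩
        hveq.symm]
      rw [pmap_sub H _ _ hHv_mem (Submodule.smul_mem _ _ hvm) _]
      rw [pmap_smul H z _ hvm _]
    -- extract first components
    have hyfst : (H ⟨Q' g, hQ'mem g⟩).fst + z • (Q' g).fst = y := by have := congrArg WithLp.fst hweq; exact this
    have hwfst : (Q' g).fst = (H ⟨Q (Q' g), hvm⟩).fst - z • (Q (Q' g)).fst :=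
      by have := (congrArg WithLp.fst hveq).symm; exact this
    have hfstHw : (H ⟨Q' g, hQ'mem g⟩).fst
        = (H ⟨H ⟨Q (Q' g), hvm⟩, hHv_mem⟩).fst - z • (H ⟨Q (Q' g), hvm⟩).fst :=
      by have := congrArg WithLp.fst hHweq; exact this
    rw [← hyfst, hfstHw, hHHv_fst, hstep, hwfst, hvfst]
    rw [smul_neg, smul_smul, Complex.I_mul_I]
    module
  · -- left inverse
    have mx1 : (x : E) ∈ sqrtS.domain := ((hdom _).mp x.2).choose
    have mx2 : sqrtS ⟨(x : E), mx1⟩ ∈ sqrtS.domain := ((hdom _).mp x.2).choose_spec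
    set q : WithLp 2 (E × E) := π.symm ((x : E), 0) with hqdef
    have hq : q ∈ H.domain := by rw [hHdom]; exact ⟨mx1, zero_mem _⟩
    have hqf : q.fst = (x : E) := rfl
    have hqs : q.snd = (0 : E) := rfl
    have hqfst : (H ⟨q, hq⟩).fst = 0 := by
      rw [Hfst sqrtS H hHdom hHact ⟨q, hq⟩ 0 rfl, LinearPMap.map_zero, smul_zero]
    have hqsnd : (H ⟨q, hq⟩).snd = -(Complex.I • sqrtS ⟨(x : E), mx1⟩) :=
      Hsnd sqrtS H hHdom hHact ⟨q, hq⟩ ⟨(x : E), mx1⟩ rfl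
    have k1 : (H ⟨q, hq⟩).fst ∈ sqrtS.domain := by rw [hqfst]; exact zero_mem _
    have k2 : (H ⟨q, hq⟩).snd ∈ sqrtS.domain := by
      rw [hqsnd]; exact neg_mem (Submodule.smul_mem _ _ mx2)
    have hHq_mem : H ⟨q, hq⟩ ∈ H.domain := by rw [hHdom]; exact ⟨k1, k2⟩
    have hp : (H ⟨q, hq⟩ : 𝒳) - z • q ∈ H.domain :=
      sub_mem hHq_mem (Submodule.smul_mem _ _ hq)
    have hHp : H ⟨(H ⟨q, hq⟩ : 𝒳) - z • q, hp⟩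
        = H ⟨H ⟨q, hq⟩, hHq_mem⟩ - z • H ⟨q, hq⟩ := by
      rw [pmap_sub H _ _ hHq_mem (Submodule.smul_mem _ _ hq) _]
      rw [pmap_smul H z _ hq _]
    have hf2 : (H ⟨H ⟨q, hq⟩, hHq_mem⟩).fst = Complex.I • sqrtS ⟨(H ⟨q, hq⟩).snd, k2⟩ :=
      Hfst sqrtS H hHdom hHact ⟨H ⟨q, hq⟩, hHq_mem⟩ ⟨_, k2⟩ rfl
    have hsub : sqrtS ⟨(H ⟨q, hq⟩).snd, k2⟩ = -(Complex.I • S x) := by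
      rw [pmap_congr' sqrtS k2
        ⟨-(Complex.I • sqrtS ⟨(x : E), mx1⟩), by rw [← hqsnd]; exact k2⟩ hqsnd]
      rw [pmap_neg sqrtS _ (Submodule.smul_mem _ _ mx2) _]
      rw [pmap_smul sqrtS Complex.I _ mx2 _]
      rw [← hsq _ mx1 mx2 x.2]
    have hHHq_snd : (H ⟨H ⟨q, hq⟩, hHq_mem⟩).snd = 0 := by
      rw [Hsnd sqrtS H hHdom hHact ⟨H ⟨q, hq⟩, hHq_mem⟩ 0 hqfst, LinearPMap.map_zero,
        smul_zero, neg_zero]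
    have claim2 : H ⟨(H ⟨q, hq⟩ : 𝒳) - z • q, hp⟩ + z • ((H ⟨q, hq⟩ : 𝒳) - z • q)
        = (π.symm (S x - z ^ 2 • (x : E), 0) : 𝒳) := by
      apply prodX_ext
      · show (H ⟨(H ⟨q, hq⟩ : 𝒳) - z • q, hp⟩).fst + z • ((H ⟨q, hq⟩).fst - z • q.fst)
          = S x - z ^ 2 • (x : E)
        have e : (H ⟨(H ⟨q, hq⟩ : 𝒳) - z • q, hp⟩).fst
            = (H ⟨H ⟨q, hq⟩, hHq_mem⟩).fst - z • (H ⟨q, hq⟩).fst := by have := congrArg WithLp.fst hHp; exact this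
        rw [e, hf2, hsub, hqfst, hqf]
        rw [smul_neg, smul_smul, Complex.I_mul_I]
        module
      · show (H ⟨(H ⟨q, hq⟩ : 𝒳) - z • q, hp⟩).snd + z • ((H ⟨q, hq⟩).snd - z • q.snd)
          = (0 : E)
        have e : (H ⟨(H ⟨q, hq⟩ : 𝒳) - z • q, hp⟩).snd
            = (H ⟨H ⟨q, hq⟩, hHq_mem⟩).snd - z • (H ⟨q, hq⟩).snd := by have := congrArg WithLp.snd hHp; exact this
        rw [e, hHHq_snd, hqs]
        module
    have e1 : Q' ((π.symm (S x - z ^ 2 • (x : E), 0) : 𝒳)) = (H ⟨q, hq⟩ : 𝒳) - z • q := by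
      rw [← claim2]
      exact hQ'left ⟨(H ⟨q, hq⟩ : 𝒳) - z • q, hp⟩
    have e2 : Q ((H ⟨q, hq⟩ : 𝒳) - z • q) = q := hQ2 ⟨q, hq⟩
    show (Q (Q' ((π.symm (S x - z ^ 2 • (x : E), 0)) : 𝒳))).fst = (x : E)
    rw [e1, e2]
    exact hqf

end main
end Stmt10Aux
end aux

/-- Let `S ≥ 0` be selfadjoint on `L²(ℝ)` with nonnegative square root `√S`, and let `H`
act on `L²(ℝ) ⊕ L²(ℝ)` by `H(z₁, z₂) = (i√S z₂, -i√S z₁)` with domain `D(√S) ⊕ D(√S)`.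
Then `H` is selfadjoint and `σ(H) = {ω : ω² ∈ σ(S)}`. -/
theorem stmt10
    (S sqrtS : L2R →ₗ.[ℂ] L2R)
    (hS : IsSelfAdjoint S) (hSpos : ∀ x : S.domain, 0 ≤ (⟪S x, (x : L2R)⟫).re)
    (hsqrt : IsSelfAdjoint sqrtS)
    (hsqrtpos : ∀ x : sqrtS.domain, 0 ≤ (⟪sqrtS x, (x : L2R)⟫).re)
    (hdom : ∀ x : L2R, x ∈ S.domain ↔ ∃ hx : x ∈ sqrtS.domain, sqrtS ⟨x, hx⟩ ∈ sqrtS.domain)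
    (hsq : ∀ (x : L2R) (hx : x ∈ sqrtS.domain) (hx2 : sqrtS ⟨x, hx⟩ ∈ sqrtS.domain)
      (hxS : x ∈ S.domain), S ⟨x, hxS⟩ = sqrtS ⟨sqrtS ⟨x, hx⟩, hx2⟩)
    (H : WithLp 2 (L2R × L2R) →ₗ.[ℂ] WithLp 2 (L2R × L2R))
    (hHdom : ∀ p : WithLp 2 (L2R × L2R), p ∈ H.domain ↔
      (WithLp.equiv 2 (L2R × L2R) p).1 ∈ sqrtS.domain ∧
      (WithLp.equiv 2 (L2R × L2R) p).2 ∈ sqrtS.domain)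
    (hHact : ∀ (p : H.domain)
      (h1 : (WithLp.equiv 2 (L2R × L2R) (p : WithLp 2 (L2R × L2R))).1 ∈ sqrtS.domain)
      (h2 : (WithLp.equiv 2 (L2R × L2R) (p : WithLp 2 (L2R × L2R))).2 ∈ sqrtS.domain),
      H p = (WithLp.equiv 2 (L2R × L2R)).symm
        (Complex.I • sqrtS ⟨(WithLp.equiv 2 (L2R × L2R) (p : WithLp 2 (L2R × L2R))).2, h2⟩,
         -(Complex.I • sqrtS ⟨(WithLp.equiv 2 (L2R × L2R) (p : WithLp 2 (L2R × L2R))).1, h1⟩))) :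
    IsSelfAdjoint H ∧ pSpectrum H = {z : ℂ | z ^ 2 ∈ pSpectrum S} := by
  constructor
  · exact Stmt10Aux.H_selfadjoint sqrtS hsqrt H hHdom hHact
  · ext z
    simp only [pSpectrum, Set.mem_setOf_eq]
    exact not_congr ⟨Stmt10Aux.res_S_of_res_H S sqrtS hsqrt hdom hsq H hHdom hHact z,
      Stmt10Aux.res_H_of_res_S S sqrtS hsqrt hdom hsq H hHdom hHact z⟩
end
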